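/- Unimodular and counimodular case: if ε ∘ σ = ε and φ(S(a)) = φ(a) for all a ∈ A (so that the modular elements δ and δ̂ are both trivial), then S⁴ = id, i.e. S⁴(a) = a for every a ∈ A. -/

import Mathlib

open TensorProduct HopfAlgebra

open Coalgebra

section Aux

variable {A : Type*} [Ring A] [HopfAlgebra ℂ A]

/-- Apply a trilinear map to an element of `A ⊗ (A ⊗ A)`. -/
noncomputable def T3 {M : Type*} [AddCommGroup M] [Module ℂ M]
    (G : A →ₗ[ℂ] A →ₗ[ℂ] A →ₗ[ℂ] M) : A ⊗[ℂ] (A ⊗[ℂ] A) →ₗ[ℂ] M :=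
  TensorProduct.lift ((TensorProduct.lift.equiv (RingHom.id ℂ) A A M).toLinearMap ∘ₗ G)

@[simp] lemma T3_tmul {M : Type*} [AddCommGroup M] [Module ℂ M]
    (G : A →ₗ[ℂ] A →ₗ[ℂ] A →ₗ[ℂ] M) (p q r : A) :
    T3 G (p ⊗ₜ (q ⊗ₜ r)) = G p q r := rfl

/-- trilinear map (p,q,r) ↦ (f p * g q) * h r -/
noncomputable def tri3 (f g h : A →ₗ[ℂ] A) : A →ₗ[ℂ] A →ₗ[ℂ] A →ₗ[ℂ] A :=
  (((LinearMap.mul ℂ A).compr₂ (LinearMap.mul ℂ A)).compl₁₂ f g).compr₂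
    (LinearMap.lcomp ℂ A h)

@[simp] lemma tri3_apply (f g h : A →ₗ[ℂ] A) (p q r : A) :
    tri3 f g h p q r = (f p * g q) * h r := rfl

/-- Product of two representations. -/
noncomputable def mulRepr {a b : A} {ι κ : Type*} (r1 : Repr ℂ a ι) (r2 : Repr ℂ b κ) :
    Repr ℂ (a * b) (ι × κ) where
  index := r1.index ×ˢ r2.index
  left := fun p => r1.left p.1 * r2.left p.2
  right := fun p => r1.right p.1 * r2.right p.2
  eq := by
    rw [Bialgebra.comul_mul, ← r1.eq, ← r2.eq, Finset.sum_mul_sum]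
    rw [Finset.sum_product]
    simp [Algebra.TensorProduct.tmul_mul_tmul]

lemma repr_smul_counit {a : A} {ι : Type*} (r : Repr ℂ a ι) :
    ∑ i ∈ r.index, counit (R := ℂ) (r.right i) • r.left i = a := by
  have h := Coalgebra.sum_tmul_counit_eq (R := ℂ) r
  calc ∑ i ∈ r.index, counit (R := ℂ) (r.right i) • r.left i
      = TensorProduct.rid ℂ A (∑ i ∈ r.index, r.left i ⊗ₜ counit (R := ℂ) (r.right i)) := by
        rw [map_sum]; simp
    _ = TensorProduct.rid ℂ A (a ⊗ₜ 1) := by rw [h]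
    _ = a := by simp

lemma repr_counit_smul {a : A} {ι : Type*} (r : Repr ℂ a ι) :
    ∑ i ∈ r.index, counit (R := ℂ) (r.left i) • r.right i = a := by
  have h := Coalgebra.sum_counit_tmul_eq (R := ℂ) r
  calc ∑ i ∈ r.index, counit (R := ℂ) (r.left i) • r.right i
      = TensorProduct.lid ℂ A (∑ i ∈ r.index, counit (R := ℂ) (r.left i) ⊗ₜ r.right i) := by
        rw [map_sum]; simp
    _ = TensorProduct.lid ℂ A (1 ⊗ₜ a) := by rw [h]
    _ = a := by simp

/-- Coassociativity transport for a trilinear map. -/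
lemma sum3 {M : Type*} [AddCommGroup M] [Module ℂ M] {a : A} {ι : Type*} {κ Λ : ι → Type*} (r : Repr ℂ a ι)
    (rL : ∀ i, Repr ℂ (r.left i) (κ i)) (rR : ∀ i, Repr ℂ (r.right i) (Λ i))
    (G : A →ₗ[ℂ] A →ₗ[ℂ] A →ₗ[ℂ] M) :
    ∑ i ∈ r.index, ∑ m ∈ (rL i).index,
        G ((rL i).left m) ((rL i).right m) (r.right i)
      = ∑ i ∈ r.index, ∑ k ∈ (rR i).index,
        G (r.left i) ((rR i).left k) ((rR i).right k) := by
  have h := Coalgebra.sum_tmul_tmul_eq (R := ℂ) r rL rR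
  apply_fun (T3 G) at h
  simpa [map_sum] using h

local notation "S" => antipode (R := ℂ)
local notation "ε" => Coalgebra.counit (R := ℂ)

lemma collapse {a : A} {ι : Type*} {Λ : ι → Type*} (r : Repr ℂ a ι)
    (rR : ∀ i, Repr ℂ (r.right i) (Λ i)) :
    ∑ i ∈ r.index, ∑ k ∈ (rR i).index,
      (S (r.left i) * (rR i).left k) ⊗ₜ[ℂ] (rR i).right k
      = (1 : A) ⊗ₜ[ℂ] a := by
  set G : A →ₗ[ℂ] A →ₗ[ℂ] A →ₗ[ℂ] (A ⊗[ℂ] A) :=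
    (((LinearMap.mul ℂ A).compl₁₂ (antipode (R := ℂ)) LinearMap.id).compr₂
      (TensorProduct.mk ℂ A A)) with hG
  have hGa : ∀ p q r' : A, G p q r' = (S p * q) ⊗ₜ[ℂ] r' := fun _ _ _ => rfl
  have h := sum3 r (fun i => ℛ ℂ (r.left i)) rR G
  simp only [hGa] at h
  rw [← h]
  have inner : ∀ i ∈ r.index,
      ∑ m ∈ (ℛ ℂ (r.left i)).index,
        (S ((ℛ ℂ (r.left i)).left m) * (ℛ ℂ (r.left i)).right m) ⊗ₜ[ℂ] (r.right i)
      = (1 : A) ⊗ₜ[ℂ] (ε (r.left i) • r.right i) := by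
    intro i _
    rw [← TensorProduct.sum_tmul, sum_antipode_mul_eq_smul (ℛ ℂ (r.left i)),
      TensorProduct.smul_tmul]
  rw [Finset.sum_congr rfl inner, ← TensorProduct.tmul_sum, repr_counit_smul r]

lemma antipode_mul (a b : A) : S (a * b) = S b * S a := by
  set ra := ℛ ℂ a with hra
  set rb := ℛ ℂ b with hrb
  set rx : (i : A × A) → Repr ℂ (ra.left i) (A × A) := fun i => ℛ ℂ (ra.left i) with hrx
  set ry : (i : A × A) → Repr ℂ (ra.right i) (A × A) := fun i => ℛ ℂ (ra.right i) with hry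
  set ru : (j : A × A) → Repr ℂ (rb.left j) (A × A) := fun j => ℛ ℂ (rb.left j) with hru
  set rv : (j : A × A) → Repr ℂ (rb.right j) (A × A) := fun j => ℛ ℂ (rb.right j) with hrv
  -- the big middle expression
  have step1 : S (a * b) = ∑ i ∈ ra.index, ∑ j ∈ rb.index,
      (ε (ra.right i) * ε (rb.right j)) • S (ra.left i * rb.left j) := by
    conv_lhs => rw [← repr_smul_counit ra, ← repr_smul_counit rb]
    rw [Finset.sum_mul_sum, map_sum]
    refine Finset.sum_congr rfl fun i _ => ?_
    rw [map_sum]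
    refine Finset.sum_congr rfl fun j _ => ?_
    rw [smul_mul_assoc, mul_smul_comm, map_smul, map_smul, smul_smul]
  have step2 : ∀ i ∈ ra.index, ∀ j ∈ rb.index,
      (ε (ra.right i) * ε (rb.right j)) • S (ra.left i * rb.left j)
      = ∑ k ∈ (ry i).index, ∑ l ∈ (rv j).index,
          (S (ra.left i * rb.left j) * ((ry i).left k * (rv j).left l)) *
            (S ((rv j).right l) * S ((ry i).right k)) := by
    intro i _ j _
    have h1 := sum_mul_antipode_eq_smul (R := ℂ) (ry i)
    have h2 := sum_mul_antipode_eq_smul (R := ℂ) (rv j)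
    calc (ε (ra.right i) * ε (rb.right j)) • S (ra.left i * rb.left j)
        = S (ra.left i * rb.left j) *
            (ε (rb.right j) • (ε (ra.right i) • (1 : A))) := by
          rw [smul_smul, mul_smul_comm, mul_one, mul_comm (ε (rb.right j))]
      _ = ∑ k ∈ (ry i).index, S (ra.left i * rb.left j) *
            ((ry i).left k * (ε (rb.right j) • S ((ry i).right k))) := by
          rw [← h1, Finset.smul_sum, Finset.mul_sum]
          refine Finset.sum_congr rfl fun k _ => ?_
          simp only [mul_smul_comm]
      _ = ∑ k ∈ (ry i).index, ∑ l ∈ (rv j).index,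
          (S (ra.left i * rb.left j) * ((ry i).left k * (rv j).left l)) *
            (S ((rv j).right l) * S ((ry i).right k)) := by
          refine Finset.sum_congr rfl fun k _ => ?_
          have he : (ε (rb.right j)) • S ((ry i).right k)
              = (∑ l ∈ (rv j).index, (rv j).left l * S ((rv j).right l)) * S ((ry i).right k) := by
            rw [h2, smul_mul_assoc, one_mul]
          rw [he, Finset.sum_mul, Finset.mul_sum, Finset.mul_sum]
          refine Finset.sum_congr rfl fun l _ => ?_
          simp only [mul_assoc]
  rw [step1, Finset.sum_congr rfl (fun i hi => Finset.sum_congr rfl (step2 i hi))]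
  -- now apply coassociativity in the a-variables
  set G : A →ₗ[ℂ] A →ₗ[ℂ] A →ₗ[ℂ] A := ∑ j ∈ rb.index, ∑ l ∈ (rv j).index,
    tri3 ((antipode (R := ℂ)) ∘ₗ LinearMap.mulRight ℂ (rb.left j))
      (LinearMap.mulRight ℂ ((rv j).left l))
      ((LinearMap.mulLeft ℂ (S ((rv j).right l))) ∘ₗ (antipode (R := ℂ))) with hGdef
  have hG : ∀ p q r' : A, G p q r' = ∑ j ∈ rb.index, ∑ l ∈ (rv j).index,
      (S (p * rb.left j) * (q * (rv j).left l)) * (S ((rv j).right l) * S r') := by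
    intro p q r'
    simp [hGdef, LinearMap.sum_apply, Finset.sum_apply, tri3_apply]
  have swapa := sum3 ra rx ry G
  have lhs_eq : ∑ i ∈ ra.index, ∑ j ∈ rb.index, ∑ k ∈ (ry i).index, ∑ l ∈ (rv j).index,
      (S (ra.left i * rb.left j) * ((ry i).left k * (rv j).left l)) *
        (S ((rv j).right l) * S ((ry i).right k))
      = ∑ i ∈ ra.index, ∑ k ∈ (ry i).index, G (ra.left i) ((ry i).left k) ((ry i).right k) := by
    refine Finset.sum_congr rfl fun i _ => ?_
    rw [Finset.sum_comm]
    refine Finset.sum_congr rfl fun k _ => ?_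
    rw [hG]
  rw [lhs_eq, ← swapa]
  -- now apply coassociativity in the b-variables
  have key : ∀ i ∈ ra.index, ∀ m ∈ (rx i).index,
      G ((rx i).left m) ((rx i).right m) (ra.right i)
      = ∑ j ∈ rb.index, ∑ n ∈ (ru j).index,
          (S ((rx i).left m * (ru j).left n) * ((rx i).right m * (ru j).right n)) *
            (S (rb.right j) * S (ra.right i)) := by
    intro i _ m _
    set G' : A →ₗ[ℂ] A →ₗ[ℂ] A →ₗ[ℂ] A :=
      tri3 ((antipode (R := ℂ)) ∘ₗ LinearMap.mulLeft ℂ ((rx i).left m))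
        (LinearMap.mulLeft ℂ ((rx i).right m))
        ((LinearMap.mulRight ℂ (S (ra.right i))) ∘ₗ (antipode (R := ℂ))) with hG'def
    have hG' : ∀ p q r' : A, G' p q r'
        = (S ((rx i).left m * p) * ((rx i).right m * q)) * (S r' * S (ra.right i)) := by
      intro p q r'; simp [hG'def, tri3_apply]
    have swapb := sum3 rb ru rv G'
    rw [hG]
    calc ∑ j ∈ rb.index, ∑ l ∈ (rv j).index,
        (S ((rx i).left m * rb.left j) * ((rx i).right m * (rv j).left l)) *
          (S ((rv j).right l) * S (ra.right i))
        = ∑ j ∈ rb.index, ∑ l ∈ (rv j).index, G' (rb.left j) ((rv j).left l) ((rv j).right l) := by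
          refine Finset.sum_congr rfl fun j _ => Finset.sum_congr rfl fun l _ => ?_
          rw [hG']
      _ = ∑ j ∈ rb.index, ∑ n ∈ (ru j).index, G' ((ru j).left n) ((ru j).right n) (rb.right j) := swapb.symm
      _ = _ := by
          refine Finset.sum_congr rfl fun j _ => Finset.sum_congr rfl fun n _ => ?_
          rw [hG']
  rw [Finset.sum_congr rfl (fun i hi => Finset.sum_congr rfl (key i hi))]
  -- collapse using the antipode axiom for products
  have coll : ∀ i ∈ ra.index, ∀ j ∈ rb.index,
      ∑ m ∈ (rx i).index, ∑ n ∈ (ru j).index,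
        (S ((rx i).left m * (ru j).left n) * ((rx i).right m * (ru j).right n)) *
          (S (rb.right j) * S (ra.right i))
      = (ε (ra.left i) * ε (rb.left j)) • (S (rb.right j) * S (ra.right i)) := by
    intro i _ j _
    have h : ∑ p ∈ (rx i).index ×ˢ (ru j).index,
        S ((rx i).left p.1 * (ru j).left p.2) * ((rx i).right p.1 * (ru j).right p.2)
        = ε (ra.left i * rb.left j) • (1 : A) :=
      sum_antipode_mul_eq_smul (R := ℂ) (mulRepr (rx i) (ru j))
    rw [Finset.sum_product] at h
    calc ∑ m ∈ (rx i).index, ∑ n ∈ (ru j).index,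
        (S ((rx i).left m * (ru j).left n) * ((rx i).right m * (ru j).right n)) *
          (S (rb.right j) * S (ra.right i))
        = (∑ m ∈ (rx i).index, ∑ n ∈ (ru j).index,
            S ((rx i).left m * (ru j).left n) * ((rx i).right m * (ru j).right n)) *
          (S (rb.right j) * S (ra.right i)) := by
          rw [Finset.sum_mul]
          exact Finset.sum_congr rfl fun m _ => by rw [Finset.sum_mul]
      _ = (ε (ra.left i * rb.left j) • (1:A)) * (S (rb.right j) * S (ra.right i)) := by rw [h]
      _ = _ := by rw [Bialgebra.counit_mul, smul_mul_assoc, one_mul]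
  rw [Finset.sum_congr rfl (fun i (_ : i ∈ ra.index) =>
    Finset.sum_comm (s := (rx i).index) (t := rb.index) (f := fun m j => ∑ n ∈ (ru j).index,
      (S ((rx i).left m * (ru j).left n) * ((rx i).right m * (ru j).right n)) *
        (S (rb.right j) * S (ra.right i))))]
  rw [Finset.sum_congr rfl (fun i hi => Finset.sum_congr rfl (coll i hi))]
  -- final collection
  have : ∑ i ∈ ra.index, ∑ j ∈ rb.index,
      (ε (ra.left i) * ε (rb.left j)) • (S (rb.right j) * S (ra.right i))
      = (∑ j ∈ rb.index, ε (rb.left j) • S (rb.right j)) *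
        (∑ i ∈ ra.index, ε (ra.left i) • S (ra.right i)) := by
    rw [Finset.sum_mul_sum, Finset.sum_comm]
    refine Finset.sum_congr rfl fun i _ => Finset.sum_congr rfl fun j _ => ?_
    simp [smul_mul_assoc, mul_smul_comm, smul_smul, mul_comm]
  rw [this]
  have hb2 : (∑ j ∈ rb.index, ε (rb.left j) • S (rb.right j)) = S b := by
    calc ∑ j ∈ rb.index, ε (rb.left j) • S (rb.right j)
        = S (∑ j ∈ rb.index, ε (rb.left j) • rb.right j) := by
          rw [map_sum]
          exact Finset.sum_congr rfl fun j _ => (map_smul _ _ _).symm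
      _ = S b := by rw [repr_counit_smul rb]
  have ha2 : (∑ i ∈ ra.index, ε (ra.left i) • S (ra.right i)) = S a := by
    calc ∑ i ∈ ra.index, ε (ra.left i) • S (ra.right i)
        = S (∑ i ∈ ra.index, ε (ra.left i) • ra.right i) := by
          rw [map_sum]
          exact Finset.sum_congr rfl fun i _ => (map_smul _ _ _).symm
      _ = S a := by rw [repr_counit_smul ra]
  rw [hb2, ha2]

lemma intl (φ : A →ₗ[ℂ] ℂ)
    (hφL : ∀ a : A, (TensorProduct.rid ℂ A) (LinearMap.lTensor A φ (Coalgebra.comul a))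
      = φ a • (1 : A))
    {c : A} {ι : Type*} (r : Repr ℂ c ι) :
    ∑ i ∈ r.index, φ (r.right i) • r.left i = φ c • (1 : A) := by
  calc ∑ i ∈ r.index, φ (r.right i) • r.left i
      = (TensorProduct.rid ℂ A) (LinearMap.lTensor A φ
          (∑ i ∈ r.index, r.left i ⊗ₜ[ℂ] r.right i)) := by
        rw [map_sum, map_sum]
        exact Finset.sum_congr rfl fun i _ => by simp
    _ = (TensorProduct.rid ℂ A) (LinearMap.lTensor A φ (Coalgebra.comul c)) := by rw [r.eq]
    _ = φ c • (1 : A) := hφL c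

lemma strong_inv (φ : A →ₗ[ℂ] ℂ)
    (hφL : ∀ a : A, (TensorProduct.rid ℂ A) (LinearMap.lTensor A φ (Coalgebra.comul a))
      = φ a • (1 : A))
    {ι κ : Type*} (a b : A) (ra : Repr ℂ a ι) (rb : Repr ℂ b κ) :
    ∑ i ∈ rb.index, φ (rb.right i * a) • S (rb.left i)
      = ∑ j ∈ ra.index, φ (b * ra.right j) • ra.left j := by
  set ry : (i : κ) → Repr ℂ (rb.right i) (A × A) := fun i => ℛ ℂ (rb.right i) with hry
  set B : ι → (A ⊗[ℂ] A →ₗ[ℂ] A) := fun j =>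
    (LinearMap.mulRight ℂ (ra.left j)) ∘ₗ (TensorProduct.rid ℂ A).toLinearMap ∘ₗ
      (LinearMap.lTensor A (φ ∘ₗ (LinearMap.mulRight ℂ (ra.right j)))) with hBdef
  have hB : ∀ j (x y : A), B j (x ⊗ₜ[ℂ] y) = φ (y * ra.right j) • (x * ra.left j) := by
    intro j x y
    simp [hBdef, smul_mul_assoc]
  have inv1 : ∀ i, φ (rb.right i * a) • (1:A)
      = ∑ k ∈ (ry i).index, ∑ j ∈ ra.index,
          φ ((ry i).right k * ra.right j) • ((ry i).left k * ra.left j) := by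
    intro i
    have h : ∑ p ∈ (ry i).index ×ˢ ra.index,
        φ ((ry i).right p.1 * ra.right p.2) • ((ry i).left p.1 * ra.left p.2)
        = φ (rb.right i * a) • (1:A) := intl φ hφL (mulRepr (ry i) ra)
    rw [Finset.sum_product] at h
    exact h.symm
  calc ∑ i ∈ rb.index, φ (rb.right i * a) • S (rb.left i)
      = ∑ i ∈ rb.index, ∑ k ∈ (ry i).index, ∑ j ∈ ra.index,
          φ ((ry i).right k * ra.right j) • (S (rb.left i) * ((ry i).left k * ra.left j)) := by
        refine Finset.sum_congr rfl fun i _ => ?_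
        calc φ (rb.right i * a) • S (rb.left i)
            = S (rb.left i) * (φ (rb.right i * a) • (1:A)) := by rw [mul_smul_comm, mul_one]
          _ = _ := by
              rw [inv1 i, Finset.mul_sum]
              refine Finset.sum_congr rfl fun k _ => ?_
              rw [Finset.mul_sum]
              refine Finset.sum_congr rfl fun j _ => ?_
              rw [mul_smul_comm]
    _ = ∑ j ∈ ra.index, ∑ i ∈ rb.index, ∑ k ∈ (ry i).index,
          φ ((ry i).right k * ra.right j) • (S (rb.left i) * ((ry i).left k * ra.left j)) := by
        rw [Finset.sum_congr rfl (fun i (_ : i ∈ rb.index) =>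
          Finset.sum_comm (s := (ry i).index) (t := ra.index)
            (f := fun k j => φ ((ry i).right k * ra.right j) •
              (S (rb.left i) * ((ry i).left k * ra.left j))))]
        exact Finset.sum_comm
    _ = ∑ j ∈ ra.index, B j (∑ i ∈ rb.index, ∑ k ∈ (ry i).index,
          (S (rb.left i) * (ry i).left k) ⊗ₜ[ℂ] (ry i).right k) := by
        refine Finset.sum_congr rfl fun j _ => ?_
        rw [map_sum]
        refine Finset.sum_congr rfl fun i _ => ?_
        rw [map_sum]
        refine Finset.sum_congr rfl fun k _ => ?_
        rw [hB, mul_assoc]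
    _ = ∑ j ∈ ra.index, B j ((1:A) ⊗ₜ[ℂ] b) := by rw [collapse rb ry]
    _ = ∑ j ∈ ra.index, φ (b * ra.right j) • ra.left j := by
        refine Finset.sum_congr rfl fun j _ => ?_
        rw [hB, one_mul]

lemma strong_inv' (φ : A →ₗ[ℂ] ℂ)
    (hφL : ∀ a : A, (TensorProduct.rid ℂ A) (LinearMap.lTensor A φ (Coalgebra.comul a))
      = φ a • (1 : A))
    (hS : Function.Bijective (antipode (R := ℂ) (A := A)))
    {ι κ : Type*} (a b : A) (ra : Repr ℂ a ι) (rb : Repr ℂ b κ) :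
    ∑ i ∈ rb.index, φ (rb.right i * a) • rb.left i
      = ∑ j ∈ ra.index, φ (b * ra.right j) •
          ((LinearEquiv.ofBijective (antipode (R := ℂ)) hS).symm (ra.left j)) := by
  set E := LinearEquiv.ofBijective (antipode (R := ℂ)) hS with hE
  have key : ∀ x : A, E.symm (S x) = x := fun x => E.symm_apply_apply x
  have h := strong_inv φ hφL a b ra rb
  calc ∑ i ∈ rb.index, φ (rb.right i * a) • rb.left i
      = E.symm (∑ i ∈ rb.index, φ (rb.right i * a) • S (rb.left i)) := by
        rw [map_sum]
        refine Finset.sum_congr rfl fun i _ => ?_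
        rw [map_smul, key]
    _ = E.symm (∑ j ∈ ra.index, φ (b * ra.right j) • ra.left j) := by rw [h]
    _ = ∑ j ∈ ra.index, φ (b * ra.right j) • E.symm (ra.left j) := by
        rw [map_sum]
        exact Finset.sum_congr rfl fun j _ => by rw [map_smul]

lemma comul_sigma_pair (φ : A →ₗ[ℂ] ℂ)
    (hφL : ∀ a : A, (TensorProduct.rid ℂ A) (LinearMap.lTensor A φ (Coalgebra.comul a))
      = φ a • (1 : A))
    (hS : Function.Bijective (antipode (R := ℂ) (A := A)))
    (σ : A ≃ₐ[ℂ] A) (hσ : ∀ a b : A, φ (a * b) = φ (b * σ a))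
    {ι κ : Type*} (b : A) (rb : Repr ℂ b ι) (rσ : Repr ℂ ((σ : A → A) b) κ) (a : A) :
    ∑ t ∈ rσ.index, φ (a * rσ.right t) • rσ.left t
      = ∑ i ∈ rb.index, φ (a * σ (rb.right i)) • S (S (rb.left i)) := by
  set E := LinearEquiv.ofBijective (antipode (R := ℂ)) hS with hE
  have key2 : ∀ x : A, S (E.symm x) = x := fun x => E.apply_symm_apply x
  set ra := ℛ ℂ a with hra
  have h2 := strong_inv' φ hφL hS a b ra rb
  calc ∑ t ∈ rσ.index, φ (a * rσ.right t) • rσ.left t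
      = ∑ i ∈ ra.index, φ (ra.right i * σ b) • S (ra.left i) :=
        (strong_inv φ hφL (σ b) a rσ ra).symm
    _ = ∑ i ∈ ra.index, φ (b * ra.right i) • S (ra.left i) := by
        refine Finset.sum_congr rfl fun i _ => ?_
        rw [← hσ b (ra.right i)]
    _ = S (S (∑ i ∈ ra.index, φ (b * ra.right i) • E.symm (ra.left i))) := by
        rw [map_sum, map_sum]
        refine Finset.sum_congr rfl fun i _ => ?_
        rw [map_smul, map_smul, key2]
    _ = S (S (∑ i ∈ rb.index, φ (rb.right i * a) • rb.left i)) := by rw [← h2]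
    _ = ∑ i ∈ rb.index, φ (a * σ (rb.right i)) • S (S (rb.left i)) := by
        rw [map_sum, map_sum]
        refine Finset.sum_congr rfl fun i _ => ?_
        rw [map_smul, map_smul, hσ (rb.right i) a]

lemma tensor_inj (φ : A →ₗ[ℂ] ℂ) (hφf2 : ∀ a : A, (∀ b : A, φ (b * a) = 0) → a = 0)
    (T : A ⊗[ℂ] A)
    (h : ∀ a : A, (TensorProduct.rid ℂ A)
      (LinearMap.lTensor A (φ ∘ₗ LinearMap.mulLeft ℂ a) T) = 0) :
    T = 0 := by
  classical
  set Bs := Module.Basis.ofVectorSpace ℂ A with hBs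
  set bb := Bs.tensorProduct Bs with hbb
  set c := bb.repr T with hc
  set s1 := c.support.image Prod.fst with hs1
  set s2 := c.support.image Prod.snd with hs2
  set n : _ → A := fun i => ∑ j ∈ s2, c (i, j) • Bs j with hn
  have hT : T = ∑ i ∈ s1, Bs i ⊗ₜ[ℂ] n i := by
    have h0 : T = ∑ p ∈ c.support, c p • bb p := by
      have := bb.linearCombination_repr T
      rw [Finsupp.linearCombination_apply, Finsupp.sum] at this
      exact this.symm
    have hsub : c.support ⊆ s1 ×ˢ s2 := by
      intro p hp
      rw [Finset.mem_product]
      exact ⟨Finset.mem_image_of_mem _ hp, Finset.mem_image_of_mem _ hp⟩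
    calc T = ∑ p ∈ c.support, c p • bb p := h0
      _ = ∑ p ∈ s1 ×ˢ s2, c p • bb p := by
          refine Finset.sum_subset hsub fun p _ hp => ?_
          rw [Finsupp.notMem_support_iff.mp hp, zero_smul]
      _ = ∑ i ∈ s1, ∑ j ∈ s2, c (i, j) • (Bs i ⊗ₜ[ℂ] Bs j) := by
          rw [Finset.sum_product]
          exact Finset.sum_congr rfl fun i _ => Finset.sum_congr rfl fun j _ => by
            rw [Module.Basis.tensorProduct_apply]
      _ = ∑ i ∈ s1, Bs i ⊗ₜ[ℂ] n i := by
          refine Finset.sum_congr rfl fun i _ => ?_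
          rw [hn, TensorProduct.tmul_sum]
          exact Finset.sum_congr rfl fun j _ => by rw [TensorProduct.tmul_smul]
  have hzero : ∀ i ∈ s1, n i = 0 := by
    intro i his
    refine hφf2 (n i) fun a => ?_
    have ha' : ∑ i' ∈ s1, φ (a * n i') • Bs i' = 0 := by
      have ha := h a
      rw [hT, map_sum, map_sum] at ha
      simpa using ha
    have li := Bs.linearIndependent
    rw [linearIndependent_iff'] at li
    exact li s1 (fun i' => φ (a * n i')) ha' i his
  rw [hT]
  exact Finset.sum_eq_zero fun i hi => by rw [hzero i hi, TensorProduct.tmul_zero]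

lemma sigma_eq_S2 (φ : A →ₗ[ℂ] ℂ)
    (hφL : ∀ a : A, (TensorProduct.rid ℂ A) (LinearMap.lTensor A φ (Coalgebra.comul a))
      = φ a • (1 : A))
    (hφf2 : ∀ a : A, (∀ b : A, φ (b * a) = 0) → a = 0)
    (hS : Function.Bijective (antipode (R := ℂ) (A := A)))
    (σ : A ≃ₐ[ℂ] A) (hσ : ∀ a b : A, φ (a * b) = φ (b * σ a))
    (hcounimod : ∀ a : A, Coalgebra.counit (R := ℂ) (σ a) = Coalgebra.counit (R := ℂ) a)
    (b : A) : σ b = S (S b) := by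
  set rb := ℛ ℂ b with hrb
  set rσ := ℛ ℂ ((σ : A → A) b) with hrσ
  have hcm : Coalgebra.comul (R := ℂ) (σ b)
      = ∑ i ∈ rb.index, S (S (rb.left i)) ⊗ₜ[ℂ] σ (rb.right i) := by
    rw [← sub_eq_zero]
    refine tensor_inj φ hφf2 _ fun a => ?_
    rw [map_sub, map_sub, sub_eq_zero]
    have e1 : (TensorProduct.rid ℂ A) (LinearMap.lTensor A (φ ∘ₗ LinearMap.mulLeft ℂ a)
        (Coalgebra.comul (R := ℂ) (σ b))) = ∑ t ∈ rσ.index, φ (a * rσ.right t) • rσ.left t := by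
      rw [← rσ.eq, map_sum, map_sum]
      exact Finset.sum_congr rfl fun t _ => by simp
    have e2 : (TensorProduct.rid ℂ A) (LinearMap.lTensor A (φ ∘ₗ LinearMap.mulLeft ℂ a)
        (∑ i ∈ rb.index, S (S (rb.left i)) ⊗ₜ[ℂ] σ (rb.right i)))
        = ∑ i ∈ rb.index, φ (a * σ (rb.right i)) • S (S (rb.left i)) := by
      rw [map_sum, map_sum]
      exact Finset.sum_congr rfl fun i _ => by simp
    rw [e1, e2]
    exact comul_sigma_pair φ hφL hS σ hσ b rb rσ a
  have hterm : ∀ i : A × A, (TensorProduct.rid ℂ A)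
      (LinearMap.lTensor A (Coalgebra.counit (R := ℂ) (A := A))
        (S (S (rb.left i)) ⊗ₜ[ℂ] σ (rb.right i)))
      = ε (rb.right i) • S (S (rb.left i)) := by
    intro i
    simp [hcounimod]
  calc σ b
      = (TensorProduct.rid ℂ A) (LinearMap.lTensor A (Coalgebra.counit (R := ℂ) (A := A))
          (Coalgebra.comul (R := ℂ) (σ b))) := by
        rw [Coalgebra.lTensor_counit_comul]
        simp
    _ = ∑ i ∈ rb.index, ε (rb.right i) • S (S (rb.left i)) := by
        rw [hcm, map_sum, map_sum]
        exact Finset.sum_congr rfl fun i _ => hterm i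
    _ = S (S (∑ i ∈ rb.index, ε (rb.right i) • rb.left i)) := by
        rw [map_sum, map_sum]
        exact Finset.sum_congr rfl fun i _ => by rw [map_smul, map_smul]
    _ = S (S b) := by rw [repr_smul_counit rb]

end Aux


/-- Unimodular and counimodular case: if `ε ∘ σ = ε` and `φ ∘ S = φ`, then `S⁴ = id`. -/
theorem unimodular_counimodular_S4_eq_id
    {A : Type*} [Ring A] [HopfAlgebra ℂ A]
    (hS : Function.Bijective (antipode (R := ℂ) (A := A)))
    (φ : A →ₗ[ℂ] ℂ) (hφ0 : φ ≠ 0)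
    (hφL : ∀ a : A,
      (TensorProduct.rid ℂ A) (LinearMap.lTensor A φ (Coalgebra.comul a)) = φ a • (1 : A))
    (hφf1 : ∀ a : A, (∀ b : A, φ (a * b) = 0) → a = 0)
    (hφf2 : ∀ a : A, (∀ b : A, φ (b * a) = 0) → a = 0)
    (σ : A ≃ₐ[ℂ] A) (hσ : ∀ a b : A, φ (a * b) = φ (b * σ a))
    (hcounimod : ∀ a : A, Coalgebra.counit (R := ℂ) (σ a) = Coalgebra.counit (R := ℂ) a)
    (hunimod : ∀ a : A, φ (antipode (R := ℂ) a) = φ a) :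
    ∀ a : A,
      antipode (R := ℂ) (antipode (R := ℂ) (antipode (R := ℂ) (antipode (R := ℂ) a))) = a := by
  intro a
  have hσS : ∀ x : A, σ x = antipode (R := ℂ) (antipode (R := ℂ) x) :=
    fun x => sigma_eq_S2 φ hφL hφf2 hS σ hσ hcounimod x
  have key : ∀ x y : A, φ (x * y) =
      φ (x * antipode (R := ℂ) (antipode (R := ℂ) (antipode (R := ℂ) (antipode (R := ℂ) y)))) := by
    intro x y
    calc φ (x * y) = φ (antipode (R := ℂ) (x * y)) := (hunimod (x * y)).symm
      _ = φ (antipode (R := ℂ) y * antipode (R := ℂ) x) := by rw [_root_.antipode_mul]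
      _ = φ (antipode (R := ℂ) x * σ (antipode (R := ℂ) y)) :=
          hσ (antipode (R := ℂ) y) (antipode (R := ℂ) x)
      _ = φ (antipode (R := ℂ) x *
            antipode (R := ℂ) (antipode (R := ℂ) (antipode (R := ℂ) y))) := by rw [hσS]
      _ = φ (antipode (R := ℂ)
            (antipode (R := ℂ) (antipode (R := ℂ) y) * x)) := by rw [_root_.antipode_mul]
      _ = φ (antipode (R := ℂ) (antipode (R := ℂ) y) * x) := hunimod _
      _ = φ (x * σ (antipode (R := ℂ) (antipode (R := ℂ) y))) :=
          hσ (antipode (R := ℂ) (antipode (R := ℂ) y)) x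
      _ = φ (x * antipode (R := ℂ) (antipode (R := ℂ)
            (antipode (R := ℂ) (antipode (R := ℂ) y)))) := by rw [hσS]
  have hz : ∀ x : A,
      φ (x * (antipode (R := ℂ) (antipode (R := ℂ)
        (antipode (R := ℂ) (antipode (R := ℂ) a))) - a)) = 0 := by
    intro x
    rw [mul_sub, map_sub, ← key x a, sub_self]
  exact sub_eq_zero.mp (hφf2 _ hz)
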